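/- Let W be a module over the degenerate affine Hecke algebra H_N. On the subspace of skew-invariants (W ⊗ (C^n)^{⊗N})^{S_N}_− (where S_N acts diagonally, on W via C[S_N] ⊂ H_N and on (C^n)^{⊗N} by permuting factors, and skew-invariants means each σ_p acts as −1), the assignments T_{ij}^{(s+1)} ↦ Σ_{p=1}^N y_p^s ⊗ E_{ij}^{(p)} (s = 0,1,2,..., with y_p^0 = 1) define an action of the Yangian Y(gl_n). -/
import Mathlib


/-- Auxiliary family in the free algebra: `yangT n 0 i j = δ_{ij}` and
`yangT n (s+1) i j` is the generator corresponding to `T_{ij}^{(s+1)}`. -/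
noncomputable def yangT (n : ℕ) : ℕ → Fin n → Fin n → FreeAlgebra ℂ (ℕ × Fin n × Fin n)
  | 0, i, j => if i = j then 1 else 0
  | s + 1, i, j => FreeAlgebra.ι ℂ (s, i, j)

/-- The defining relations of the Yangian `Y(gl_n)`: these are the
coefficients of `(u-v)·[T_{ij}(u), T_{kl}(v)] = T_{kj}(u)T_{il}(v) - T_{kj}(v)T_{il}(u)`
at `u^{-r} v^{-s}`, where `T_{ij}(u) = δ_{ij} + Σ_{s≥1} T_{ij}^{(s)} u^{-s}`. -/
inductive YangianRel (n : ℕ) :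
    FreeAlgebra ℂ (ℕ × Fin n × Fin n) → FreeAlgebra ℂ (ℕ × Fin n × Fin n) → Prop
  | rtt (r s : ℕ) (i j k l : Fin n) :
      YangianRel n
        (yangT n (r + 1) i j * yangT n s k l - yangT n s k l * yangT n (r + 1) i j
          - (yangT n r i j * yangT n (s + 1) k l - yangT n (s + 1) k l * yangT n r i j))
        (yangT n r k j * yangT n s i l - yangT n s k j * yangT n r i l)

/-- The Yangian `Y(gl_n)`. -/
abbrev Yangian (n : ℕ) := RingQuot (YangianRel n)

/-- The generators `T_{ij}^{(s)}` of `Y(gl_n)` (for `s = 0` this is `δ_{ij}`). -/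
noncomputable def yangGen (n : ℕ) (s : ℕ) (i j : Fin n) : Yangian n :=
  RingQuot.mkAlgHom ℂ (YangianRel n) (yangT n s i j)

/- An `H_N`-module `W` is given by a representation `ρ` of the symmetric
group `S_N` together with operators `y p` satisfying the relations
`σ y_p σ⁻¹ = y_{σ(p)}` and `[y_p, y_q] = σ_{pq}(y_p - y_q)` of the
degenerate affine Hecke algebra.  The tensor product `W ⊗ (ℂ^n)^{⊗N}` is
modelled as the space of `W`-valued coefficient functions
`(Fin N → Fin n) → W`. -/

variable {W : Type*} [AddCommGroup W] [Module ℂ W]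

/-- The diagonal action of `σ ∈ S_N` on `W ⊗ (ℂ^n)^{⊗N}`:
`σ` acts on `W` via `ρ` and permutes the `N` tensor factors `ℂ^n`. -/
noncomputable def diagPerm (n N : ℕ) (ρ : Equiv.Perm (Fin N) →* Module.End ℂ W)
    (σ : Equiv.Perm (Fin N)) : Module.End ℂ ((Fin N → Fin n) → W) where
  toFun F := fun h => ρ σ (F (h ∘ σ))
  map_add' F G := by funext h; simp
  map_smul' c F := by funext h; simp

/-- The subspace of skew invariants
`(W ⊗ (ℂ^n)^{⊗N})^{S_N}_-`: each permutation `σ` of the diagonal action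
acts as the sign `sgn σ`. -/
noncomputable def skewInv (n N : ℕ) (ρ : Equiv.Perm (Fin N) →* Module.End ℂ W) :
    Submodule ℂ ((Fin N → Fin n) → W) where
  carrier := {F | ∀ σ : Equiv.Perm (Fin N),
    diagPerm n N ρ σ F = (((Equiv.Perm.sign σ : ℤ) : ℂ)) • F}
  add_mem' {F G} hF hG := by
    intro σ
    rw [map_add, hF σ, hG σ, smul_add]
  zero_mem' := by
    intro σ
    rw [map_zero, smul_zero]
  smul_mem' c F hF := by
    intro σ
    rw [map_smul, hF σ, smul_comm]

/-- The operator `Σ_{p=1}^N y_p^s ⊗ E_{ij}^{(p)}` on `W ⊗ (ℂ^n)^{⊗N}`,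
by which the generator `T_{ij}^{(s+1)}` of the Yangian is to act. -/
noncomputable def skewDrinfeldOp (n N : ℕ) (y : Fin N → Module.End ℂ W)
    (s : ℕ) (i j : Fin n) : Module.End ℂ ((Fin N → Fin n) → W) where
  toFun F := fun h =>
    ∑ p : Fin N, if h p = i then ((y p) ^ s) (F (Function.update h p j)) else 0
  map_add' F G := by
    funext h
    have key : ∀ p : Fin N,
        (if h p = i then ((y p) ^ s) (F (Function.update h p j))
            + ((y p) ^ s) (G (Function.update h p j)) else 0)
          = (if h p = i then ((y p) ^ s) (F (Function.update h p j)) else 0)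
            + (if h p = i then ((y p) ^ s) (G (Function.update h p j)) else 0) := by
      intro p; split <;> simp
    simp only [Pi.add_apply, map_add, key, Finset.sum_add_distrib]
  map_smul' c F := by
    funext h
    have key : ∀ p : Fin N,
        (if h p = i then c • ((y p) ^ s) (F (Function.update h p j)) else 0)
          = c • (if h p = i then ((y p) ^ s) (F (Function.update h p j)) else 0) := by
      intro p; split <;> simp
    simp only [Pi.smul_apply, map_smul, key, ← Finset.smul_sum, RingHom.id_apply]

section HeckeAlgebra

variable {R : Type*} [Ring R] (u v τ : R)

theorem sdf_comm1 (h : u*v - v*u = τ*(u-v)) (hu : u*τ = τ*v) (m : ℕ) :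
    u^m * v - v * u^m = τ * (u^m - v^m) := by
  induction m with
  | zero => simp
  | succ m ih =>
    have e1 : u^(m+1)*v - v*u^(m+1) = u*(u^m*v - v*u^m) + (u*v - v*u)*u^m := by
      rw [pow_succ']; noncomm_ring
    rw [e1, ih, h]
    have e2 : u * (τ * (u ^ m - v ^ m)) = τ * (v*u^m - v^(m+1)) := by
      rw [← mul_assoc, hu, mul_assoc, pow_succ']; noncomm_ring
    have e3 : τ * (u - v) * u ^ m = τ * (u^(m+1) - v*u^m) := by
      rw [mul_assoc, pow_succ']; noncomm_ring
    rw [e2, e3, ← mul_add]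
    congr 1
    noncomm_ring

theorem sdf_powconj (hv : v*τ = τ*u) (m : ℕ) : v^m * τ = τ * u^m := by
  induction m with
  | zero => simp
  | succ m ih => rw [pow_succ, pow_succ, mul_assoc, hv, ← mul_assoc, ih, mul_assoc]

theorem sdf_key (h : u*v - v*u = τ*(u-v)) (hu : u*τ = τ*v) (hv : v*τ = τ*u) (a b : ℕ) :
    u^(a+1)*v^b - v^b*u^(a+1) - (u^a*v^(b+1) - v^(b+1)*u^a)
      = τ * (u^b*v^a - u^a*v^b) := by
  induction b with
  | zero =>
    simp only [pow_zero, pow_one, one_mul, mul_one, zero_add, sub_self, zero_sub]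
    rw [sdf_comm1 u v τ h hu a]
    noncomm_ring
  | succ b ih =>
    have e1 : u^(a+1)*v^(b+1) - v^(b+1)*u^(a+1) - (u^a*v^(b+2) - v^(b+2)*u^a)
        = (u^(a+1)*v^b - v^b*u^(a+1) - (u^a*v^(b+1) - v^(b+1)*u^a)) * v
          + v^b * (u^(a+1)*v - v*u^(a+1)) - v^(b+1) * (u^a*v - v*u^a) := by
      rw [pow_succ v b, pow_succ v (b+1)]
      noncomm_ring
    rw [e1, ih, sdf_comm1 u v τ h hu (a+1), sdf_comm1 u v τ h hu a,
      ← mul_assoc, ← mul_assoc, sdf_powconj u v τ hv b, sdf_powconj u v τ hv (b+1),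
      mul_assoc, mul_assoc, mul_assoc, ← mul_add, ← mul_sub]
    congr 1
    have f1 : u^b * (u^(a+1) - v^(a+1)) = u^(a+b+1) - u^b*v^(a+1) := by
      rw [mul_sub, ← pow_add]; ring_nf
    have f2 : u^(b+1) * (u^a - v^a) = u^(a+b+1) - u^(b+1)*v^a := by
      rw [mul_sub, ← pow_add]; ring_nf
    have f3 : (u^b*v^a - u^a*v^b) * v = u^b*v^(a+1) - u^a*v^(b+1) := by
      rw [sub_mul, mul_assoc, mul_assoc, ← pow_succ, ← pow_succ]
    rw [f1, f2, f3]
    noncomm_ring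

end HeckeAlgebra

section Core

variable {n N : ℕ} (ρ : Equiv.Perm (Fin N) →* Module.End ℂ W) (y : Fin N → Module.End ℂ W)

theorem sdf_op_apply (s : ℕ) (i j : Fin n) (F : (Fin N → Fin n) → W) (h : Fin N → Fin n) :
    skewDrinfeldOp n N y s i j F h
      = ∑ p : Fin N, if h p = i then ((y p) ^ s) (F (Function.update h p j)) else 0 := rfl

theorem sdf_mem_skewInv {F : (Fin N → Fin n) → W} :
    F ∈ skewInv n N ρ ↔ ∀ σ : Equiv.Perm (Fin N),
      diagPerm n N ρ σ F = (((Equiv.Perm.sign σ : ℤ) : ℂ)) • F := Iff.rfl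

theorem sdf_skew_apply {F : (Fin N → Fin n) → W} (hF : F ∈ skewInv n N ρ)
    (σ : Equiv.Perm (Fin N)) (h : Fin N → Fin n) :
    ρ σ (F (h ∘ σ)) = (((Equiv.Perm.sign σ : ℤ) : ℂ)) • F h :=
  congrFun ((sdf_mem_skewInv ρ).mp hF σ) h

theorem sdf_hconj_pow (hconj : ∀ (σ : Equiv.Perm (Fin N)) (p : Fin N), ρ σ * y p = y (σ p) * ρ σ)
    (σ : Equiv.Perm (Fin N)) (p : Fin N) (s : ℕ) :
    ρ σ * (y p) ^ s = (y (σ p)) ^ s * ρ σ := by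
  induction s with
  | zero => simp
  | succ s ih => rw [pow_succ, pow_succ, ← mul_assoc, ih, mul_assoc, hconj, ← mul_assoc]

theorem sdf_update_comp (h : Fin N → Fin n) (σ : Equiv.Perm (Fin N)) (p : Fin N) (j : Fin n) :
    Function.update (h ∘ σ) p j = (Function.update h (σ p) j) ∘ σ := by
  funext x
  by_cases hx : x = p
  · subst hx; simp
  · have : σ x ≠ σ p := fun e => hx (σ.injective e)
    simp [Function.update_of_ne hx, Function.update_of_ne this]

theorem sdf_mem (hconj : ∀ (σ : Equiv.Perm (Fin N)) (p : Fin N), ρ σ * y p = y (σ p) * ρ σ)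
    (s : ℕ) (i j : Fin n) {F : (Fin N → Fin n) → W} (hF : F ∈ skewInv n N ρ) :
    skewDrinfeldOp n N y s i j F ∈ skewInv n N ρ := by
  intro σ
  funext h
  show ρ σ (skewDrinfeldOp n N y s i j F (h ∘ σ)) = _
  rw [sdf_op_apply, map_sum]
  have step : ∀ p : Fin N,
      ρ σ (if (h ∘ σ) p = i then ((y p) ^ s) (F (Function.update (h ∘ σ) p j)) else 0)
        = (((Equiv.Perm.sign σ : ℤ) : ℂ)) •
            (if h (σ p) = i then ((y (σ p)) ^ s) (F (Function.update h (σ p) j)) else 0) := by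
    intro p
    rw [apply_ite (ρ σ), map_zero, smul_ite, smul_zero]
    refine if_congr (by rfl) ?_ rfl
    rw [sdf_update_comp, ← Module.End.mul_apply, sdf_hconj_pow ρ y hconj,
      Module.End.mul_apply, sdf_skew_apply ρ hF σ, map_smul]
  rw [Finset.sum_congr rfl fun p _ => step p, ← Finset.smul_sum]
  rw [Equiv.sum_comp σ (fun q => if h q = i then ((y q) ^ s) (F (Function.update h q j)) else 0)]
  rfl


theorem sdf_pair_sum_split {M : Type*} [AddCommMonoid M] (f : Fin N → Fin N → M) :
    ∑ p, ∑ q, f p q = (∑ p, f p p) + ∑ pq ∈ Finset.univ.offDiag, f pq.1 pq.2 := by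
  rw [← Finset.sum_product' (f := f), ← Finset.diag_union_offDiag (Finset.univ : Finset (Fin N)),
    Finset.sum_union (Finset.disjoint_diag_offDiag _), Finset.sum_diag]

theorem sdf_offDiag_swap {M : Type*} [AddCommMonoid M] (f : Fin N → Fin N → M) :
    ∑ pq ∈ Finset.univ.offDiag, f pq.1 pq.2 = ∑ pq ∈ Finset.univ.offDiag, f pq.2 pq.1 := by
  refine Finset.sum_nbij' (fun pq => (pq.2, pq.1)) (fun pq => (pq.2, pq.1)) ?_ ?_ ?_ ?_ ?_ <;>
    simp [Finset.mem_offDiag, eq_comm, ne_comm]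

theorem sdf_comp_eval (a b : ℕ) (x y' z w : Fin n) (F : (Fin N → Fin n) → W) (h : Fin N → Fin n) :
    skewDrinfeldOp n N y a x y' (skewDrinfeldOp n N y b z w F) h
      = (if y' = z then skewDrinfeldOp n N y (a+b) x w F h else 0)
        + ∑ pq ∈ Finset.univ.offDiag,
            (if h pq.1 = x ∧ h pq.2 = z then
              ((y pq.1)^a) (((y pq.2)^b) (F (Function.update (Function.update h pq.1 y') pq.2 w)))
            else 0) := by
  have e1 : skewDrinfeldOp n N y a x y' (skewDrinfeldOp n N y b z w F) h
      = ∑ p, ∑ q, (if h p = x ∧ Function.update h p y' q = z then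
          ((y p)^a) (((y q)^b) (F (Function.update (Function.update h p y') q w))) else 0) := by
    rw [sdf_op_apply]
    refine Finset.sum_congr rfl fun p _ => ?_
    by_cases hpx : h p = x
    · rw [if_pos hpx, sdf_op_apply, map_sum]
      refine Finset.sum_congr rfl fun q _ => ?_
      rw [apply_ite ((y p)^a), map_zero]
      exact if_congr (by simp [hpx]) rfl rfl
    · rw [if_neg hpx]
      exact (Finset.sum_eq_zero fun q _ => by simp [hpx]).symm
  rw [e1, sdf_pair_sum_split]
  congr 1
  · -- diagonal
    by_cases hyz : y' = z
    · rw [if_pos hyz, sdf_op_apply, Finset.sum_congr rfl fun p _ => ?_]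
      rw [Function.update_self, Function.update_idem, pow_add, Module.End.mul_apply]
      exact if_congr (by simp [hyz]) rfl rfl
    · rw [if_neg hyz]
      exact Finset.sum_eq_zero fun p _ => by simp [Function.update_self, hyz]
  · refine Finset.sum_congr rfl fun pq hpq => ?_
    have hne : pq.1 ≠ pq.2 := (Finset.mem_offDiag.mp hpq).2.2
    exact if_congr (by rw [Function.update_of_ne (Ne.symm hne)]) rfl rfl


theorem sdf_comp_eval' (a b : ℕ) (x y' z w : Fin n) (F : (Fin N → Fin n) → W) (h : Fin N → Fin n) :
    skewDrinfeldOp n N y a x y' (skewDrinfeldOp n N y b z w F) h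
      = (if y' = z then skewDrinfeldOp n N y (a+b) x w F h else 0)
        + ∑ pq ∈ Finset.univ.offDiag,
            (if h pq.2 = x ∧ h pq.1 = z then
              ((y pq.2)^a) (((y pq.1)^b) (F (Function.update (Function.update h pq.2 y') pq.1 w)))
            else 0) := by
  rw [sdf_comp_eval]
  congr 1
  exact sdf_offDiag_swap fun p q =>
    if h p = x ∧ h q = z then
      ((y p)^a) (((y q)^b) (F (Function.update (Function.update h p y') q w))) else 0

theorem sdf_update_swap (h : Fin N → Fin n) (p q : Fin N) (hpq : p ≠ q) (j l : Fin n) :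
    Function.update (Function.update h p j) q l
      = (Function.update (Function.update h p l) q j) ∘ (Equiv.swap p q) := by
  funext x
  simp only [Function.comp_apply]
  rcases eq_or_ne x p with rfl | hxp
  · rw [Equiv.swap_apply_left, Function.update_of_ne hpq, Function.update_self,
      Function.update_self]
  · rcases eq_or_ne x q with rfl | hxq
    · rw [Equiv.swap_apply_right, Function.update_self, Function.update_of_ne hpq,
        Function.update_self]
    · rw [Equiv.swap_apply_of_ne_of_ne hxp hxq, Function.update_of_ne hxq,
        Function.update_of_ne hxp, Function.update_of_ne hxq, Function.update_of_ne hxp]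

theorem sdf_pair (hconj : ∀ (σ : Equiv.Perm (Fin N)) (p : Fin N), ρ σ * y p = y (σ p) * ρ σ)
    (hycomm : ∀ p q : Fin N, y p * y q - y q * y p = ρ (Equiv.swap p q) * (y p - y q))
    (r s : ℕ) {F : (Fin N → Fin n) → W} (hF : F ∈ skewInv n N ρ)
    (p q : Fin N) (hpq : p ≠ q) (u1 u2 : Fin N → Fin n)
    (hu : u1 = u2 ∘ (Equiv.swap p q)) :
    ((y p)^(r+1)) (((y q)^s) (F u1)) - ((y q)^s) (((y p)^(r+1)) (F u1))
      - (((y p)^r) (((y q)^(s+1)) (F u1)) - ((y q)^(s+1)) (((y p)^r) (F u1)))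
    = ((y q)^r) (((y p)^s) (F u2)) - ((y q)^s) (((y p)^r) (F u2)) := by
  have hu' : y p * ρ (Equiv.swap p q) = ρ (Equiv.swap p q) * y q := by
    rw [hconj (Equiv.swap p q) q, Equiv.swap_apply_right]
  have hv' : y q * ρ (Equiv.swap p q) = ρ (Equiv.swap p q) * y p := by
    rw [hconj (Equiv.swap p q) p, Equiv.swap_apply_left]
  have hk := sdf_key (y p) (y q) (ρ (Equiv.swap p q)) (hycomm p q) hu' hv' r s
  have hk' := DFunLike.congr_fun hk (F u1)
  simp only [LinearMap.sub_apply, Module.End.mul_apply, map_sub] at hk'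
  have conj1 : ∀ (a b : ℕ) (v : W),
      ρ (Equiv.swap p q) (((y p) ^ a) (((y q) ^ b) v))
        = ((y q) ^ a) (((y p) ^ b) (ρ (Equiv.swap p q) v)) := by
    intro a b v
    have e : ρ (Equiv.swap p q) * (y p) ^ a * (y q) ^ b
        = (y q) ^ a * ((y p) ^ b * ρ (Equiv.swap p q)) := by
      rw [sdf_hconj_pow ρ y hconj (Equiv.swap p q) p a, Equiv.swap_apply_left, mul_assoc,
        sdf_hconj_pow ρ y hconj (Equiv.swap p q) q b, Equiv.swap_apply_right, ← mul_assoc,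
        mul_assoc]
    calc ρ (Equiv.swap p q) (((y p) ^ a) (((y q) ^ b) v))
        = (ρ (Equiv.swap p q) * (y p) ^ a * (y q) ^ b) v := by
          simp [Module.End.mul_apply]
      _ = ((y q) ^ a * ((y p) ^ b * ρ (Equiv.swap p q))) v := by rw [e]
      _ = ((y q) ^ a) (((y p) ^ b) (ρ (Equiv.swap p q) v)) := by
          simp [Module.End.mul_apply]
  have hsk : ρ (Equiv.swap p q) (F u1) = -(F u2) := by
    rw [hu]
    rw [sdf_skew_apply ρ hF (Equiv.swap p q) u2, Equiv.Perm.sign_swap hpq]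
    norm_num
  rw [hk', conj1, conj1, hsk]
  simp only [map_neg]
  abel

theorem sdf_rearrange {M : Type*} [AddCommGroup M] (D1 D2 S1 S2 S3 S4 : M) :
    (D1 + S1) - (D2 + S2) - ((D1 + S3) - (D2 + S4)) = S1 - S2 - (S3 - S4) := by abel

theorem sdf_rearrange' {M : Type*} [AddCommGroup M] (D S5 S6 : M) :
    (D + S5) - (D + S6) = S5 - S6 := by abel

theorem sdf_offsum (hconj : ∀ (σ : Equiv.Perm (Fin N)) (p : Fin N), ρ σ * y p = y (σ p) * ρ σ)
    (hycomm : ∀ p q : Fin N, y p * y q - y q * y p = ρ (Equiv.swap p q) * (y p - y q))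
    (r s : ℕ) (i j k l : Fin n) {F : (Fin N → Fin n) → W} (hF : F ∈ skewInv n N ρ)
    (h : Fin N → Fin n) :
    (∑ pq ∈ Finset.univ.offDiag,
        (if h pq.1 = i ∧ h pq.2 = k then
          ((y pq.1)^(r+1)) (((y pq.2)^s)
            (F (Function.update (Function.update h pq.1 j) pq.2 l))) else 0))
    - (∑ pq ∈ Finset.univ.offDiag,
        (if h pq.2 = k ∧ h pq.1 = i then
          ((y pq.2)^s) (((y pq.1)^(r+1))
            (F (Function.update (Function.update h pq.2 l) pq.1 j))) else 0))
    - ((∑ pq ∈ Finset.univ.offDiag,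
        (if h pq.1 = i ∧ h pq.2 = k then
          ((y pq.1)^r) (((y pq.2)^(s+1))
            (F (Function.update (Function.update h pq.1 j) pq.2 l))) else 0))
      - (∑ pq ∈ Finset.univ.offDiag,
        (if h pq.2 = k ∧ h pq.1 = i then
          ((y pq.2)^(s+1)) (((y pq.1)^r)
            (F (Function.update (Function.update h pq.2 l) pq.1 j))) else 0)))
    = (∑ pq ∈ Finset.univ.offDiag,
        (if h pq.2 = k ∧ h pq.1 = i then
          ((y pq.2)^r) (((y pq.1)^s)
            (F (Function.update (Function.update h pq.2 j) pq.1 l))) else 0))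
      - (∑ pq ∈ Finset.univ.offDiag,
        (if h pq.2 = k ∧ h pq.1 = i then
          ((y pq.2)^s) (((y pq.1)^r)
            (F (Function.update (Function.update h pq.2 j) pq.1 l))) else 0)) := by
  rw [← Finset.sum_sub_distrib, ← Finset.sum_sub_distrib, ← Finset.sum_sub_distrib,
    ← Finset.sum_sub_distrib]
  refine Finset.sum_congr rfl fun pq hpq => ?_
  have hne : pq.1 ≠ pq.2 := (Finset.mem_offDiag.mp hpq).2.2
  by_cases h1 : h pq.1 = i
  · by_cases h2 : h pq.2 = k
    · simp only [h1, h2, and_self, if_true, true_and, and_true, if_pos]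
      rw [Function.update_comm (Ne.symm hne) l j h,
        Function.update_comm (Ne.symm hne) j l h]
      exact sdf_pair ρ y hconj hycomm r s hF pq.1 pq.2 hne _ _
        (sdf_update_swap h pq.1 pq.2 hne j l)
    · simp [h1, h2]
  · simp [h1]

theorem sdf_easy (m : ℕ) (i j k l : Fin n) (F : (Fin N → Fin n) → W) (h : Fin N → Fin n) :
    skewDrinfeldOp n N y 0 k l (skewDrinfeldOp n N y m i j F) h
      - skewDrinfeldOp n N y m i j (skewDrinfeldOp n N y 0 k l F) h
    = (if l = i then skewDrinfeldOp n N y m k j F h else 0)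
      - (if j = k then skewDrinfeldOp n N y m i l F h else 0) := by
  rw [sdf_comp_eval y 0 m k l i j F h, sdf_comp_eval' y m 0 i j k l F h,
    Nat.zero_add, Nat.add_zero]
  have hS : (∑ pq ∈ Finset.univ.offDiag,
      (if h pq.1 = k ∧ h pq.2 = i then
        ((y pq.1)^0) (((y pq.2)^m)
          (F (Function.update (Function.update h pq.1 l) pq.2 j))) else 0))
      = ∑ pq ∈ Finset.univ.offDiag,
        (if h pq.2 = i ∧ h pq.1 = k then
          ((y pq.2)^m) (((y pq.1)^0)
            (F (Function.update (Function.update h pq.2 j) pq.1 l))) else 0) := by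
    refine Finset.sum_congr rfl fun pq hpq => ?_
    have hne : pq.1 ≠ pq.2 := (Finset.mem_offDiag.mp hpq).2.2
    rw [Function.update_comm (Ne.symm hne) j l h]
    simp only [pow_zero, Module.End.one_apply, and_comm]
  rw [hS]
  abel

theorem sdf_main (hconj : ∀ (σ : Equiv.Perm (Fin N)) (p : Fin N), ρ σ * y p = y (σ p) * ρ σ)
    (hycomm : ∀ p q : Fin N, y p * y q - y q * y p = ρ (Equiv.swap p q) * (y p - y q))
    (r s : ℕ) (i j k l : Fin n) {F : (Fin N → Fin n) → W} (hF : F ∈ skewInv n N ρ)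
    (h : Fin N → Fin n) :
    skewDrinfeldOp n N y (r+1) i j (skewDrinfeldOp n N y s k l F) h
      - skewDrinfeldOp n N y s k l (skewDrinfeldOp n N y (r+1) i j F) h
      - (skewDrinfeldOp n N y r i j (skewDrinfeldOp n N y (s+1) k l F) h
        - skewDrinfeldOp n N y (s+1) k l (skewDrinfeldOp n N y r i j F) h)
    = skewDrinfeldOp n N y r k j (skewDrinfeldOp n N y s i l F) h
      - skewDrinfeldOp n N y s k j (skewDrinfeldOp n N y r i l F) h := by
  rw [sdf_comp_eval y (r+1) s i j k l F h, sdf_comp_eval' y s (r+1) k l i j F h,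
    sdf_comp_eval y r (s+1) i j k l F h, sdf_comp_eval' y (s+1) r k l i j F h,
    sdf_comp_eval' y r s k j i l F h, sdf_comp_eval' y s r k j i l F h]
  rw [show r + 1 + s = r + (s + 1) by omega, show s + (r + 1) = s + 1 + r by omega,
    show s + r = r + s by omega]
  rw [sdf_rearrange, sdf_rearrange']
  exact sdf_offsum ρ y hconj hycomm r s i j k l hF h

end Core

/-- Proposition 1.2, the skew Drinfeld functor: for any
`H_N`-module `W`, the assignments
`T_{ij}^{(s+1)} ↦ Σ_p y_p^s ⊗ E_{ij}^{(p)}` define an action of the Yangian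
`Y(gl_n)` on the subspace of skew invariants `(W ⊗ (ℂ^n)^{⊗N})^{S_N}_-`.
In particular each operator `Σ_p y_p^s ⊗ E_{ij}^{(p)}` preserves that
subspace. -/
theorem skew_drinfeld_functor (n N : ℕ)
    (ρ : Equiv.Perm (Fin N) →* Module.End ℂ W)
    (y : Fin N → Module.End ℂ W)
    (hconj : ∀ (σ : Equiv.Perm (Fin N)) (p : Fin N), ρ σ * y p = y (σ p) * ρ σ)
    (hycomm : ∀ p q : Fin N,
      y p * y q - y q * y p = ρ (Equiv.swap p q) * (y p - y q)) :
    ∃ φ : Yangian n →ₐ[ℂ] Module.End ℂ (skewInv n N ρ),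
      ∀ (s : ℕ) (i j : Fin n) (F : skewInv n N ρ),
        ((φ (yangGen n (s + 1) i j) F : skewInv n N ρ) : (Fin N → Fin n) → W)
          = skewDrinfeldOp n N y s i j (F : (Fin N → Fin n) → W) := by
  classical
  set R : ℕ → Fin n → Fin n → Module.End ℂ (skewInv n N ρ) := fun s i j =>
    (skewDrinfeldOp n N y s i j).restrict
      (fun F hF => sdf_mem ρ y hconj s i j hF) with hR
  set f : FreeAlgebra ℂ (ℕ × Fin n × Fin n) →ₐ[ℂ] Module.End ℂ (skewInv n N ρ) :=
    FreeAlgebra.lift ℂ (fun g : ℕ × Fin n × Fin n => R g.1 g.2.1 g.2.2) with hfdef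
  have hfT : ∀ (s : ℕ) (i j : Fin n), f (yangT n (s+1) i j) = R s i j := by
    intro s i j
    show f (FreeAlgebra.ι ℂ (s, i, j)) = R s i j
    rw [hfdef, FreeAlgebra.lift_ι_apply]
  have hf0 : ∀ (i j : Fin n), f (yangT n 0 i j)
      = if i = j then (1 : Module.End ℂ (skewInv n N ρ)) else 0 := by
    intro i j
    show f (if i = j then 1 else 0) = _
    by_cases hij : i = j <;> simp [hij]
  have hcoe : ∀ (a : ℕ) (x x' : Fin n) (Fv : skewInv n N ρ),
      ((R a x x' Fv : skewInv n N ρ) : (Fin N → Fin n) → W)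
        = skewDrinfeldOp n N y a x x' (Fv : (Fin N → Fin n) → W) := fun a x x' Fv => rfl
  have hone : ∀ (c : Prop) (inst : Decidable c) (G : skewInv n N ρ) (h : Fin N → Fin n),
      (((if c then (1 : Module.End ℂ (skewInv n N ρ)) else 0) G : skewInv n N ρ)
        : (Fin N → Fin n) → W) h = if c then (G : (Fin N → Fin n) → W) h else 0 := by
    intro c inst G h
    split <;> simp
  have hop0 : ∀ (a : ℕ) (x x' : Fin n) (c : Prop) (inst : Decidable c)
      (G : skewInv n N ρ) (h : Fin N → Fin n),
      skewDrinfeldOp n N y a x x'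
        ((((if c then (1 : Module.End ℂ (skewInv n N ρ)) else 0) G : skewInv n N ρ))
          : (Fin N → Fin n) → W) h
        = if c then skewDrinfeldOp n N y a x x' (G : (Fin N → Fin n) → W) h else 0 := by
    intro a x x' c inst G h
    split <;> simp
  have hrel : ∀ ⦃a b⦄, YangianRel n a b → f a = f b := by
    intro a b hab
    cases hab with
    | rtt r s i j k l =>
      cases r with
      | zero =>
        cases s with
        | zero =>
          simp only [map_sub, map_mul, hfT, hf0, sub_self]
          by_cases hij : i = j <;> by_cases hkl : k = l <;> simp [hij, hkl]
        | succ s' =>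
          simp only [map_sub, map_mul, hfT, hf0]
          apply LinearMap.ext
          intro Fv
          apply Subtype.ext
          funext h
          simp only [LinearMap.sub_apply, Module.End.mul_apply, AddSubgroupClass.coe_sub,
            Pi.sub_apply, hcoe, hone, hop0, sub_self, sub_zero]
          rw [sdf_easy y s' k l i j (Fv : (Fin N → Fin n) → W) h]
          by_cases h1 : k = j <;> by_cases h2 : i = l
          · simp [h1, h2]
          · simp [h1, h2, Ne.symm h2]
          · simp [h1, h2, Ne.symm h1]
          · simp [h1, h2, Ne.symm h1, Ne.symm h2]
      | succ r' =>
        cases s with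
        | zero =>
          simp only [map_sub, map_mul, hfT, hf0]
          apply LinearMap.ext
          intro Fv
          apply Subtype.ext
          funext h
          simp only [LinearMap.sub_apply, Module.End.mul_apply, AddSubgroupClass.coe_sub,
            Pi.sub_apply, hcoe, hone, hop0, sub_self, zero_sub]
          rw [neg_sub, sdf_easy y r' i j k l (Fv : (Fin N → Fin n) → W) h]
          by_cases h1 : i = l <;> by_cases h2 : k = j
          · simp [h1, h2]
          · simp [h1, h2, Ne.symm h2]
          · simp [h1, h2, Ne.symm h1]
          · simp [h1, h2, Ne.symm h1, Ne.symm h2]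
        | succ s' =>
          simp only [map_sub, map_mul, hfT]
          apply LinearMap.ext
          intro Fv
          apply Subtype.ext
          funext h
          simp only [LinearMap.sub_apply, Module.End.mul_apply, AddSubgroupClass.coe_sub,
            Pi.sub_apply, hcoe]
          exact sdf_main ρ y hconj hycomm r' s' i j k l Fv.2 h
  refine ⟨RingQuot.liftAlgHom ℂ ⟨f, hrel⟩, ?_⟩
  intro s i j F
  have hg : yangGen n (s+1) i j = RingQuot.mkAlgHom ℂ (YangianRel n) (yangT n (s+1) i j) := rfl
  rw [hg, RingQuot.liftAlgHom_mkAlgHom_apply, hfT]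
  exact hcoe s i j F
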